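/- Two signed graphs with the same underlying graph are switching equivalent if and only if they have the same set of positive cycles. -/

import Mathlib

structure SignedGraph (V : Type*) where
  G : SimpleGraph V
  sign : V → V → ℤ
  sign_symm : ∀ u v, sign u v = sign v u
  sign_mem : ∀ u v, G.Adj u v → sign u v = 1 ∨ sign u v = -1
  sign_not : ∀ u v, ¬ G.Adj u v → sign u v = 0

namespace SignedGraph

variable {V : Type*}

/-- The adjacency matrix of a signed graph, over `ℝ`. -/
noncomputable def adjMatrix (Γ : SignedGraph V) : Matrix V V ℝ :=
  fun u v => (Γ.sign u v : ℝ)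

/-- The largest eigenvalue `λ₁` of a signed graph. -/
noncomputable def lambda1 (Γ : SignedGraph V) [Fintype V] : ℝ :=
  letI := Classical.decEq V
  sSup (spectrum ℝ Γ.adjMatrix)

/-- The smallest eigenvalue `λₙ` of a signed graph. -/
noncomputable def lambdaMin (Γ : SignedGraph V) [Fintype V] : ℝ :=
  letI := Classical.decEq V
  sInf (spectrum ℝ Γ.adjMatrix)

/-- The spectral radius `ρ = max {λ₁, -λₙ}` of a signed graph. -/
noncomputable def rho (Γ : SignedGraph V) [Fintype V] : ℝ :=
  max Γ.lambda1 (-Γ.lambdaMin)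

/-- The sign (product of edge signs) of a walk. -/
def walkSign (Γ : SignedGraph V) {G' : SimpleGraph V} : ∀ {u v : V}, G'.Walk u v → ℤ
  | _, _, .nil => 1
  | _, _, .cons (u := a) (v := b) _ p => Γ.sign a b * walkSign Γ p

/-- A signed graph is balanced if every cycle is positive. -/
def Balanced (Γ : SignedGraph V) : Prop :=
  ∀ (u : V) (w : Γ.G.Walk u u), w.IsCycle → Γ.walkSign w = 1

def Unbalanced (Γ : SignedGraph V) : Prop := ¬ Γ.Balanced

/-- `Γ` has a negative cycle of length `k`. -/
def HasNegCycleOfLength (Γ : SignedGraph V) (k : ℕ) : Prop :=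
  ∃ (u : V) (w : Γ.G.Walk u u), w.IsCycle ∧ Γ.walkSign w = -1 ∧ w.length = k

/-- Switching equivalence: same underlying graph and signs related by a switching function. -/
def SwitchingEquivalent (Γ Γ' : SignedGraph V) : Prop :=
  Γ.G = Γ'.G ∧ ∃ s : V → ℤ, (∀ v, s v = 1 ∨ s v = -1) ∧
    ∀ u v, Γ'.sign u v = s u * Γ.sign u v * s v

/-- Switching isomorphism. -/
def SwitchingIsomorphic {V' : Type*} (Γ : SignedGraph V) (Γ' : SignedGraph V') : Prop :=
  ∃ (e : V ≃ V') (s : V → ℤ), (∀ v, s v = 1 ∨ s v = -1) ∧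
    (∀ u v, Γ'.G.Adj (e u) (e v) ↔ Γ.G.Adj u v) ∧
    (∀ u v, Γ'.sign (e u) (e v) = s u * Γ.sign u v * s v)

/-- Build a signed graph from a symmetric sign function with values in `{0, 1, -1}`. -/
def ofSign (s : V → V → ℤ) (hsymm : ∀ u v, s u v = s v u)
    (hloop : ∀ v, s v v = 0)
    (hval : ∀ u v, s u v = 0 ∨ s u v = 1 ∨ s u v = -1) : SignedGraph V where
  G := { Adj := fun u v => s u v ≠ 0
         symm := ⟨fun u v h => by
           show s v u ≠ 0
           rw [hsymm v u]; exact h⟩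
         loopless := ⟨fun v h => h (hloop v)⟩ }
  sign := s
  sign_symm := hsymm
  sign_mem := fun u v h => (hval u v).resolve_left h
  sign_not := fun u v h => not_not.mp h

/-- Build a signed graph on `Fin n` from a sign function on ordered pairs of naturals. -/
def ofMinMaxAux (n : ℕ) (aux : ℕ → ℕ → ℤ) (h0 : ∀ a, aux a a = 0)
    (hval : ∀ a b, aux a b = 0 ∨ aux a b = 1 ∨ aux a b = -1) : SignedGraph (Fin n) :=
  ofSign (fun i j => aux (min i.val j.val) (max i.val j.val))
    (fun i j => by
      show aux (min i.val j.val) (max i.val j.val) = aux (min j.val i.val) (max j.val i.val)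
      rw [min_comm, max_comm])
    (fun i => by
      show aux (min i.val i.val) (max i.val i.val) = 0
      rw [min_self, max_self, h0])
    (fun i j => hval _ _)

def gammaNAux : ℕ → ℕ → ℤ := fun a b =>
  if a = b then 0
  else if a = 0 ∧ b = 1 then -1
  else if a = 0 ∧ b = 2 then 1
  else if a = 1 ∧ b = 3 then 1
  else if 2 ≤ a ∧ a < b ∧ ¬(a = 2 ∧ b = 3) then 1
  else 0

/-- The signed graph `Γₙ`: a copy of `K_{n-2}` (on `{2, …, n-1}`) with the edge `{2,3}`
removed, together with two new vertices `0, 1` and edges `{0,1}` (negative),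
`{0,2}` and `{1,3}` (positive); all other edges positive. -/
def GammaN (n : ℕ) : SignedGraph (Fin n) :=
  ofMinMaxAux n gammaNAux (fun a => by simp [gammaNAux])
    (fun a b => by unfold gammaNAux; split_ifs <;> simp)

def gammaNTauAux (τ : ℕ) : ℕ → ℕ → ℤ := fun a b =>
  if a = b then 0
  else if a = 0 ∧ b = 1 then -1
  else if a = 0 ∧ b = 3 then 1
  else if a = 0 ∧ 4 ≤ b ∧ b ≤ τ + 3 then 1
  else if a = 1 ∧ b = 2 then 1
  else if a = 2 ∧ τ + 4 ≤ b then 1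
  else if a = 3 ∧ 4 ≤ b then 1
  else if 4 ≤ a ∧ a < b then 1
  else 0

/-- The signed graph `Γ_{n,τ}`: here `v₁ = 0`, `v₂ = 1`, `v₃ = 2`, `v₅ = 3`,
`X = {4, …, τ+3}`, `Y = {τ+4, …, n-1}` (with `v₄ = τ+4 ∈ Y`); the edge `{0,1}` is the
unique negative edge. -/
def GammaNTau (n τ : ℕ) : SignedGraph (Fin n) :=
  ofMinMaxAux n (gammaNTauAux τ) (fun a => by simp [gammaNTauAux])
    (fun a b => by unfold gammaNTauAux; split_ifs <;> simp)

/-- The negation `-Γ` of a signed graph. -/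
def neg (Γ : SignedGraph V) : SignedGraph V where
  G := Γ.G
  sign := fun u v => - Γ.sign u v
  sign_symm := fun u v => by
    show -Γ.sign u v = -Γ.sign v u
    rw [Γ.sign_symm]
  sign_mem := fun u v h => by
    show -Γ.sign u v = 1 ∨ -Γ.sign u v = -1
    rcases Γ.sign_mem u v h with h' | h' <;> simp [h']
  sign_not := fun u v h => by
    show -Γ.sign u v = 0
    simp [Γ.sign_not u v h]

/-- The induced signed subgraph on a set of vertices. -/
def induce (Γ : SignedGraph V) (S : Set V) : SignedGraph S where
  G := { Adj := fun u v => Γ.G.Adj u v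
         symm := ⟨fun u v h => Γ.G.symm.symm u v h⟩
         loopless := ⟨fun u h => Γ.G.loopless.irrefl u h⟩ }
  sign := fun u v => Γ.sign u v
  sign_symm := fun u v => Γ.sign_symm u v
  sign_mem := fun u v h => Γ.sign_mem u v h
  sign_not := fun u v h => Γ.sign_not u v h

/-- `S` is a balanced clique of `Γ`: it induces a complete subgraph which is balanced. -/
def IsBalancedClique [DecidableEq V] (Γ : SignedGraph V) (S : Finset V) : Prop :=
  (∀ u ∈ S, ∀ v ∈ S, u ≠ v → Γ.G.Adj u v) ∧ (Γ.induce (S : Set V)).Balanced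

end SignedGraph

namespace SwitchAux

open SimpleGraph

variable {V : Type*} {G : SimpleGraph V}

/-- Generic walk sign for a sign function `σ`. -/
def wS (σ : V → V → ℤ) : ∀ {u v : V}, G.Walk u v → ℤ
  | _, _, .nil => 1
  | _, _, .cons (u := a) (v := b) _ p => σ a b * wS σ p

lemma walkSign_eq_wS (Γ : SignedGraph V) {G' : SimpleGraph V} {u v : V} (w : G'.Walk u v) :
    Γ.walkSign w = wS Γ.sign w := by
  induction w with
  | nil => rfl
  | cons h p ih => simp only [SignedGraph.walkSign, wS, ih]

lemma wS_append (σ : V → V → ℤ) {u v w : V} (p : G.Walk u v) (q : G.Walk v w) :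
    wS σ (p.append q) = wS σ p * wS σ q := by
  induction p with
  | nil => simp [wS]
  | cons h p ih => simp only [Walk.cons_append, wS, ih]; ring

lemma wS_mul (σ₁ σ₂ : V → V → ℤ) {u v : V} (p : G.Walk u v) :
    wS (fun a b => σ₁ a b * σ₂ a b) p = wS σ₁ p * wS σ₂ p := by
  induction p with
  | nil => rfl
  | cons h p ih => simp only [wS, ih]; ring

lemma wS_pm (σ : V → V → ℤ) (hpm : ∀ u v, G.Adj u v → σ u v = 1 ∨ σ u v = -1)
    {u v : V} (p : G.Walk u v) : wS σ p = 1 ∨ wS σ p = -1 := by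
  induction p with
  | nil => left; rfl
  | cons h p ih =>
    rcases hpm _ _ h with h1 | h1 <;> rcases ih with h2 | h2 <;> simp [wS, h1, h2]

lemma wS_reverse (σ : V → V → ℤ) (hsymm : ∀ u v, σ u v = σ v u)
    {u v : V} (p : G.Walk u v) : wS σ p.reverse = wS σ p := by
  induction p with
  | nil => rfl
  | cons h p ih =>
    rw [Walk.reverse_cons, wS_append, ih]
    show wS σ p * (σ _ _ * wS σ (Walk.nil)) = σ _ _ * wS σ p
    rw [hsymm]
    show wS σ p * (σ _ _ * 1) = σ _ _ * wS σ p
    ring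

/-- In a path of length ≥ 2, the edge joining the two endpoints does not occur. -/
lemma not_edge_end {a b : V} (p : G.Walk a b) (hp : p.IsPath) (hlen : 2 ≤ p.length) :
    s(a, b) ∉ p.edges := by
  intro he
  cases p with
  | nil => simp at hlen
  | @cons _ d _ h q =>
    rw [Walk.edges_cons, List.mem_cons] at he
    have hq : q.IsPath := (Walk.cons_isPath_iff h q).mp hp |>.1
    have hns : a ∉ q.support := (Walk.cons_isPath_iff h q).mp hp |>.2
    rcases he with he | he
    · rw [Sym2.eq_iff] at he
      rcases he with ⟨-, rfl⟩ | ⟨rfl, -⟩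
      · -- q : Walk b b is a path, so q = nil, contradicting length
        cases q with
        | nil => simp at hlen
        | cons h3 r =>
          have := ((Walk.cons_isPath_iff h3 r).mp hq).2
          exact this r.end_mem_support
      · exact hns q.start_mem_support
    · exact hns (Walk.fst_mem_support_of_mem_edges q he)

/-- If every cycle has sign 1, every closed walk has sign 1. -/
lemma wS_closed_eq_one (σ : V → V → ℤ) (hsymm : ∀ u v, σ u v = σ v u)
    (hpm : ∀ u v, G.Adj u v → σ u v = 1 ∨ σ u v = -1)
    (hcyc : ∀ (u : V) (w : G.Walk u u), w.IsCycle → wS σ w = 1) :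
    ∀ (u : V) (w : G.Walk u u), wS σ w = 1 := by
  classical
  suffices H : ∀ n, ∀ (u : V) (w : G.Walk u u), w.length = n → wS σ w = 1 from
    fun u w => H w.length u w rfl
  intro n
  induction n using Nat.strong_induction_on with
  | _ n IH =>
  intro u w hlen
  by_contra hneg'
  have hneg : wS σ w = -1 := (wS_pm σ hpm w).resolve_left hneg'
  by_cases hnd : w.support.tail.Nodup
  · -- w is a cycle (or short), contradiction
    cases w with
    | nil => simp [wS] at hneg
    | @cons _ x _ h p =>
      have hp : p.IsPath := by
        rw [Walk.isPath_def]
        simpa using hnd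
      cases hpl : p with
      | nil =>
        subst hpl
        exact G.irrefl h
      | @cons _ y _ h2 q =>
        cases q with
        | nil =>
          -- length-2 closed walk: sign is a square
          subst hpl
          have : wS σ (Walk.cons h (Walk.cons h2 Walk.nil)) = σ u x * (σ x u * 1) := rfl
          rw [this, hsymm x u] at hneg
          rcases hpm u x h with h1 | h1 <;> rw [h1] at hneg <;> norm_num at hneg
        | cons h3 r =>
          subst hpl
          have hlen2 : 2 ≤ (Walk.cons h2 (Walk.cons h3 r)).length := by
            simp [Walk.length_cons]
          have hcyc' : (Walk.cons h (Walk.cons h2 (Walk.cons h3 r))).IsCycle := by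
            rw [Walk.cons_isCycle_iff]
            refine ⟨hp, ?_⟩
            rw [Sym2.eq_swap]
            exact not_edge_end _ hp hlen2
          exact hneg' (hcyc _ _ hcyc')
  · -- a repeated vertex in the tail: rotate and split
    obtain ⟨y, hy⟩ := List.exists_duplicate_iff_not_nodup.mpr hnd
    have hycount : 2 ≤ w.support.tail.count y := List.duplicate_iff_two_le_count.mp hy
    have hysup : y ∈ w.support := List.mem_of_mem_tail hy.mem
    have hkey : ∃ (w' : G.Walk y y), w'.length = n ∧ wS σ w' = -1 ∧
        2 ≤ w'.support.tail.count y := by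
      refine ⟨w.rotate y hysup, ?_, ?_, ?_⟩
      · have := congrArg Walk.length (w.take_spec hysup)
        rw [Walk.length_append] at this
        rw [Walk.rotate, Walk.length_append]
        omega
      · rw [Walk.rotate, wS_append, mul_comm, ← wS_append, w.take_spec hysup, hneg]
      · rw [(Walk.support_rotate w y hysup).perm.count_eq]
        exact hycount
    obtain ⟨w', hlen', hsign', hcount'⟩ := hkey
    cases w' with
    | nil => simp at hcount'
    | @cons _ z _ h2 p2 =>
      rw [Walk.support_cons, List.tail_cons] at hcount'
      have hy2 : y ∈ p2.support := by
        apply List.count_pos_iff.mp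
        omega
      have hsplit := p2.take_spec hy2
      have hlsum : (p2.takeUntil y hy2).length + (p2.dropUntil y hy2).length = p2.length := by
        have := congrArg Walk.length hsplit
        rwa [Walk.length_append] at this
      have hdrop1 : 1 ≤ (p2.dropUntil y hy2).length := by
        have hc1 : (p2.takeUntil y hy2).support.count y = 1 :=
          p2.count_support_takeUntil_eq_one hy2
        have hsupp : p2.support =
            (p2.takeUntil y hy2).support ++ (p2.dropUntil y hy2).support.tail := by
          rw [← Walk.support_append, hsplit]
        rw [hsupp, List.count_append, hc1] at hcount'
        have := List.count_le_length (a := y) (l := (p2.dropUntil y hy2).support.tail)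
        have hlensupp : (p2.dropUntil y hy2).support.tail.length
            = (p2.dropUntil y hy2).length := by
          rw [List.length_tail, Walk.length_support]
          omega
        omega
      have hlenn : p2.length + 1 = n := by
        rw [← hlen']
        simp [Walk.length_cons]
      have hIH1 : wS σ (Walk.cons h2 (p2.takeUntil y hy2)) = 1 := by
        apply IH ((p2.takeUntil y hy2).length + 1) (by omega) y
        simp [Walk.length_cons]
      have hIH2 : wS σ (p2.dropUntil y hy2) = 1 := by
        apply IH (p2.dropUntil y hy2).length (by omega) y
        rfl
      have : wS σ (Walk.cons h2 p2) =
          wS σ (Walk.cons h2 (p2.takeUntil y hy2)) * wS σ (p2.dropUntil y hy2) := by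
        conv_lhs => rw [← hsplit]
        show σ y z * wS σ ((p2.takeUntil y hy2).append (p2.dropUntil y hy2)) = _
        rw [wS_append]
        show _ = (σ y z * wS σ (p2.takeUntil y hy2)) * wS σ (p2.dropUntil y hy2)
        ring
      rw [this, hIH1, hIH2] at hsign'
      norm_num at hsign'

lemma wS_indep (σ : V → V → ℤ) (hsymm : ∀ u v, σ u v = σ v u)
    (hpm : ∀ u v, G.Adj u v → σ u v = 1 ∨ σ u v = -1)
    (hclosed : ∀ (u : V) (w : G.Walk u u), wS σ w = 1)
    {a b : V} (p q : G.Walk a b) : wS σ p = wS σ q := by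
  have h1 : wS σ (p.append q.reverse) = 1 := hclosed a _
  rw [wS_append, wS_reverse σ hsymm] at h1
  rcases wS_pm σ hpm p with h2 | h2 <;> rcases wS_pm σ hpm q with h3 | h3 <;>
    rw [h2, h3] at h1 ⊢ <;> norm_num at h1

variable (G) in
lemma reachable_root (v : V) : G.Reachable ((G.connectedComponentMk v).out) v :=
  ConnectedComponent.exact (Quot.out_eq _)

variable (G) in
/-- A switching function built from signs of walks from component representatives. -/
noncomputable def sw (σ : V → V → ℤ) (v : V) : ℤ :=
  wS σ (reachable_root G v).some

lemma sw_spec (σ : V → V → ℤ) (hsymm : ∀ u v, σ u v = σ v u)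
    (hpm : ∀ u v, G.Adj u v → σ u v = 1 ∨ σ u v = -1)
    (hclosed : ∀ (u : V) (w : G.Walk u u), wS σ w = 1)
    (c : G.ConnectedComponent) (b : V) (hb : G.connectedComponentMk b = c)
    (p : G.Walk c.out b) : sw G σ b = wS σ p := by
  subst hb
  exact wS_indep σ hsymm hpm hclosed _ p

end SwitchAux

open SignedGraph in
/-- Two signed graphs with the same underlying graph are switching equivalent
if and only if they have the same set of positive cycles. -/
theorem switching_equivalent_iff_same_positive_cycles {V : Type*} [Fintype V]
    (Γ Γ' : SignedGraph V) (hG : Γ.G = Γ'.G) :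
    Γ.SwitchingEquivalent Γ' ↔
      ∀ (u : V) (w : Γ.G.Walk u u), w.IsCycle →
        (Γ.walkSign w = 1 ↔ Γ'.walkSign w = 1) := by
  constructor
  · -- forward: switching equivalence preserves cycle signs
    rintro ⟨-, s, hs, hσ⟩ u w hw
    have key : ∀ {a b : V} (p : Γ.G.Walk a b),
        SwitchAux.wS Γ'.sign p = s a * SwitchAux.wS Γ.sign p * s b := by
      intro a b p
      induction p with
      | @nil c => rcases hs c with h | h <;> simp [SwitchAux.wS, h]
      | @cons c x d h q ih =>
        show Γ'.sign c x * SwitchAux.wS Γ'.sign q = _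
        rw [hσ, ih]
        show _ = s c * (Γ.sign c x * SwitchAux.wS Γ.sign q) * s d
        rcases hs x with hx | hx <;> rw [hx] <;> ring
    rw [SwitchAux.walkSign_eq_wS, SwitchAux.walkSign_eq_wS, key w]
    rcases hs u with hu | hu <;> rw [hu] <;> constructor <;> intro h <;> linarith
  · -- backward: same positive cycles implies switching equivalence
    intro hsame
    refine ⟨hG, ?_⟩
    classical
    set σΔ : V → V → ℤ := fun a b => Γ.sign a b * Γ'.sign a b with hσΔ
    have hsymmΔ : ∀ a b, σΔ a b = σΔ b a := fun a b => by
      simp only [hσΔ, Γ.sign_symm a b, Γ'.sign_symm a b]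
    have hpmΔ : ∀ a b, Γ.G.Adj a b → σΔ a b = 1 ∨ σΔ a b = -1 := by
      intro a b h
      rcases Γ.sign_mem a b h with h1 | h1 <;>
        rcases Γ'.sign_mem a b (hG ▸ h) with h2 | h2 <;> simp [hσΔ, h1, h2]
    have hcycΔ : ∀ (u : V) (w : Γ.G.Walk u u), w.IsCycle → SwitchAux.wS σΔ w = 1 := by
      intro u w hw
      have h1 := hsame u w hw
      rw [SwitchAux.walkSign_eq_wS, SwitchAux.walkSign_eq_wS] at h1
      have e : SwitchAux.wS σΔ w = SwitchAux.wS Γ.sign w * SwitchAux.wS Γ'.sign w :=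
        SwitchAux.wS_mul _ _ w
      have hpm1 := SwitchAux.wS_pm Γ.sign Γ.sign_mem w
      have hpm2 : SwitchAux.wS Γ'.sign w = 1 ∨ SwitchAux.wS Γ'.sign w = -1 :=
        SwitchAux.wS_pm Γ'.sign (fun a b hab => Γ'.sign_mem a b (hG ▸ hab)) w
      rcases hpm1 with h2 | h2 <;> rcases hpm2 with h3 | h3 <;>
        rw [h2, h3] at e h1 <;> simp_all
    have hclosed := SwitchAux.wS_closed_eq_one σΔ hsymmΔ hpmΔ hcycΔ
    refine ⟨SwitchAux.sw Γ.G σΔ, ?_, ?_⟩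
    · intro v
      exact SwitchAux.wS_pm σΔ hpmΔ _
    · intro u v
      by_cases h : Γ.G.Adj u v
      · have hru := SwitchAux.reachable_root Γ.G u
        set pu : Γ.G.Walk ((Γ.G.connectedComponentMk u).out) u := hru.some with hpu
        have hsu : SwitchAux.sw Γ.G σΔ u = SwitchAux.wS σΔ pu := rfl
        have hcv : Γ.G.connectedComponentMk v = Γ.G.connectedComponentMk u :=
          SimpleGraph.ConnectedComponent.sound h.symm.reachable
        have hsv : SwitchAux.sw Γ.G σΔ v =
            SwitchAux.wS σΔ (pu.append (SimpleGraph.Walk.cons h SimpleGraph.Walk.nil)) :=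
          SwitchAux.sw_spec σΔ hsymmΔ hpmΔ hclosed _ v hcv _
        rw [hsu, hsv, SwitchAux.wS_append]
        have hnil : SwitchAux.wS σΔ (SimpleGraph.Walk.cons h SimpleGraph.Walk.nil)
            = σΔ u v := by
          show σΔ u v * 1 = σΔ u v
          ring
        rw [hnil]
        have hA := SwitchAux.wS_pm σΔ hpmΔ pu
        rcases Γ.sign_mem u v h with h1 | h1 <;>
          rcases Γ'.sign_mem u v (hG ▸ h) with h2 | h2 <;>
          rcases hA with h3 | h3 <;>
          simp only [hσΔ] <;> rw [h1, h2, h3] <;> ring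
      · rw [Γ.sign_not u v h, Γ'.sign_not u v (hG ▸ h)]
        ring
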